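/- In the binary-state rating model, assume F is strictly convex on [0,1] and k < ν (equivalently c < b). Then there exist thresholds μ̲, μ̄ with 0 ≤ μ̲ ≤ μ̄ ≤ 1 such that: (a) if μ0 ≤ μ̲, the inverted fully separating belief system (μ_L = 1, μ_H = 0, τ_H = 1 − μ0, τ_L = μ0) is optimal; (b) if μ̲ < μ0 < μ̄, the pooling-on-H belief system (μ_H = μ0, τ_H = 1, τ_L = 0) is optimal; (c) if μ0 ≥ μ̄, the truthful fully separating belief system (μ_L = 0, μ_H = 1, τ_H = μ0, τ_L = 1 − μ0) is optimal. -/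

import Mathlib

open scoped BigOperators

noncomputable section
set_option maxHeartbeats 1000000

/-- Value of a belief system in the binary-state rating model:
`v̂(μ, H) = F(μ) + b − c(1−μ)` and `v̂(μ, L) = F(μ)`. -/
def ratingValue (F : ℝ → ℝ) (b c μL μH τL τH : ℝ) : ℝ :=
  τL * F μL + τH * (F μH + b - c * (1 - μH))

/-- A Bayes-plausible belief system in the binary-state rating model. -/
def IsBayesPlausibleBS (μ0 μL μH τL τH : ℝ) : Prop :=
  μL ∈ Set.Icc (0 : ℝ) 1 ∧ μH ∈ Set.Icc (0 : ℝ) 1 ∧ 0 ≤ τL ∧ 0 ≤ τH ∧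
  τL + τH = 1 ∧ τL * μL + τH * μH = μ0

/-- An optimal belief system in the binary-state rating model. -/
def IsOptimalBS (F : ℝ → ℝ) (b c μ0 μL μH τL τH : ℝ) : Prop :=
  IsBayesPlausibleBS μ0 μL μH τL τH ∧
  ∀ μL' μH' τL' τH' : ℝ, IsBayesPlausibleBS μ0 μL' μH' τL' τH' →
    ratingValue F b c μL' μH' τL' τH' ≤ ratingValue F b c μL μH τL τH


private lemma affine_convexOn (m d : ℝ) :
    ConvexOn ℝ (Set.Icc (0:ℝ) 1) (fun x => m * x + d) := by
  refine ⟨convex_Icc 0 1, ?_⟩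
  intro x _ y _ a b ha hb hab
  simp only [smul_eq_mul]
  have : a * (m * x + d) + b * (m * y + d) = m * (a * x + b * y) + d := by
    linear_combination d * hab
  linarith [this.ge]

private lemma chord_left {F : ℝ → ℝ} (hconv : ConvexOn ℝ (Set.Icc (0:ℝ) 1) F)
    (hF0 : F 0 = 0) {m x : ℝ} (hm : 0 < m) (hm1 : m ≤ 1) (hx0 : 0 ≤ x) (hxm : x ≤ m) :
    F x ≤ x * F m / m := by
  have hxm' : x / m ≤ 1 := (div_le_one hm).2 hxm
  have h := hconv.2 (show (0:ℝ) ∈ Set.Icc (0:ℝ) 1 from ⟨le_refl 0, zero_le_one⟩)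
      (show m ∈ Set.Icc (0:ℝ) 1 from ⟨hm.le, hm1⟩)
      (show (0:ℝ) ≤ 1 - x / m by linarith)
      (show (0:ℝ) ≤ x / m by positivity)
      (show (1 - x / m) + x / m = 1 by ring)
  simp only [smul_eq_mul, mul_zero, zero_add, hF0] at h
  have harg : x / m * m = x := div_mul_cancel₀ x hm.ne'
  rw [harg] at h
  calc F x ≤ x / m * F m := by linarith
    _ = x * F m / m := by ring

private lemma chord_right {F : ℝ → ℝ} (hconv : ConvexOn ℝ (Set.Icc (0:ℝ) 1) F)
    (hF1 : F 1 = 1) {m x : ℝ} (hm : 0 ≤ m) (hm1 : m < 1) (hmx : m ≤ x) (hx1 : x ≤ 1) :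
    F x ≤ ((1 - x) * F m + (x - m)) / (1 - m) := by
  have hd : (0:ℝ) < 1 - m := by linarith
  have h := hconv.2 (show m ∈ Set.Icc (0:ℝ) 1 from ⟨hm, hm1.le⟩)
      (show (1:ℝ) ∈ Set.Icc (0:ℝ) 1 from ⟨zero_le_one, le_refl 1⟩)
      (show (0:ℝ) ≤ (1 - x) / (1 - m) from div_nonneg (by linarith) hd.le)
      (show (0:ℝ) ≤ (x - m) / (1 - m) from div_nonneg (by linarith) hd.le)
      (show (1 - x) / (1 - m) + (x - m) / (1 - m) = 1 by field_simp; ring)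
  simp only [smul_eq_mul, mul_one, hF1] at h
  have harg : (1 - x) / (1 - m) * m + (x - m) / (1 - m) = x := by field_simp; ring
  rw [harg] at h
  calc F x ≤ (1 - x) / (1 - m) * F m + (x - m) / (1 - m) := h
    _ = ((1 - x) * F m + (x - m)) / (1 - m) := by ring

private lemma value_le_max {F : ℝ → ℝ} (hconv : ConvexOn ℝ (Set.Icc (0:ℝ) 1) F)
    (hF0 : F 0 = 0) (hF1 : F 1 = 1) {b c : ℝ} (hc : 0 < c) (hcb : c < b)
    {μ0 μL μH τL τH : ℝ} (hμ0 : μ0 ∈ Set.Ioo (0:ℝ) 1)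
    (hp : IsBayesPlausibleBS μ0 μL μH τL τH) :
    ratingValue F b c μL μH τL τH ≤
      max (μ0 + (1 - μ0) * (b - c)) (max (F μ0 + b - c * (1 - μ0)) (μ0 * (1 + b))) := by
  obtain ⟨⟨hL0, hL1⟩, ⟨hH0, hH1⟩, hτL, hτH, hsum, hbayes⟩ := hp
  obtain ⟨h0, h1⟩ := hμ0
  have h0' : (0:ℝ) < 1 - μ0 := by linarith
  set I := μ0 + (1 - μ0) * (b - c) with hI
  set P := F μ0 + b - c * (1 - μ0) with hP
  set T := μ0 * (1 + b) with hT
  set M := max I (max P T) with hM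
  have hPM : P ≤ M := le_trans (le_max_left _ _) (le_max_right _ _)
  have hIM : I ≤ M := le_max_left _ _
  have hTM : T ≤ M := le_trans (le_max_right _ _) (le_max_right _ _)
  have hFμ0P : F μ0 ≤ P := by
    have : 0 ≤ b - c * (1 - μ0) := by nlinarith
    rw [hP]; linarith
  have hFM : F μ0 ≤ M := le_trans hFμ0P hPM
  rcases le_total μ0 μH with hA | hB
  · -- Case A : μ0 ≤ μH
    have bound1 : τL * F μL ≤ (μ0 - τH * μH) * F μ0 / μ0 := by
      rcases eq_or_lt_of_le hτL with h | h
      · rw [← h] at hbayes ⊢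
        rw [show μ0 - τH * μH = 0 by linarith]
        simp
      · have hμLμ0 : μL ≤ μ0 := by
          have h2 : τL * μL ≤ τL * μ0 := by nlinarith
          exact le_of_mul_le_mul_left h2 h
        have hch := chord_left hconv hF0 h0 h1.le hL0 hμLμ0
        calc τL * F μL ≤ τL * (μL * F μ0 / μ0) := mul_le_mul_of_nonneg_left hch hτL
          _ = (τL * μL) * F μ0 / μ0 := by ring
          _ = (μ0 - τH * μH) * F μ0 / μ0 := by rw [show τL * μL = μ0 - τH * μH by linarith]
    have bound2 : F μH ≤ ((1 - μH) * F μ0 + (μH - μ0)) / (1 - μ0) :=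
      chord_right hconv hF1 h0.le h1 hA hH1
    have bound2' : τH * (F μH + b - c * (1 - μH)) ≤
        ((τH - τH * μH) * F μ0 + (τH * μH - τH * μ0)) / (1 - μ0)
          + τH * (b - c) + c * (τH * μH) := by
      have h2 := mul_le_mul_of_nonneg_left bound2 hτH
      have heq : τH * (((1 - μH) * F μ0 + (μH - μ0)) / (1 - μ0)) =
          ((τH - τH * μH) * F μ0 + (τH * μH - τH * μ0)) / (1 - μ0) := by
        field_simp
      nlinarith [h2, heq]
    set a : ℝ := (μ0 - τH * μH) / μ0 with ha'
    set p : ℝ := (τH - τH * μH) / (1 - μ0) with hp'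
    set q : ℝ := (τH * μH - τH * μ0) / (μ0 * (1 - μ0)) with hq'
    have ha : 0 ≤ a := by
      apply div_nonneg _ h0.le
      nlinarith
    have hpn : 0 ≤ p := by
      apply div_nonneg _ h0'.le
      nlinarith
    have hqn : 0 ≤ q := by
      apply div_nonneg _ (by positivity)
      nlinarith
    have hsum1 : a + p + q = 1 := by
      rw [ha', hp', hq']; field_simp; ring
    have hXeq : (μ0 - τH * μH) * F μ0 / μ0
        + (((τH - τH * μH) * F μ0 + (τH * μH - τH * μ0)) / (1 - μ0)
          + τH * (b - c) + c * (τH * μH))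
        = a * F μ0 + p * P + q * T := by
      rw [ha', hp', hq', hP, hT]; field_simp; ring
    have hfin : a * F μ0 + p * P + q * T ≤ M := by
      have := mul_le_mul_of_nonneg_left hFM ha
      have := mul_le_mul_of_nonneg_left hPM hpn
      have := mul_le_mul_of_nonneg_left hTM hqn
      nlinarith [hsum1]
    calc ratingValue F b c μL μH τL τH
        ≤ (μ0 - τH * μH) * F μ0 / μ0
          + (((τH - τH * μH) * F μ0 + (τH * μH - τH * μ0)) / (1 - μ0)
            + τH * (b - c) + c * (τH * μH)) := by
          unfold ratingValue; linarith [bound1, bound2']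
      _ = a * F μ0 + p * P + q * T := hXeq
      _ ≤ M := hfin
  · -- Case B : μH ≤ μ0
    have bound1 : τL * F μL ≤ ((τL - (μ0 - τH * μH)) * F μ0 + ((μ0 - τH * μH) - τL * μ0)) / (1 - μ0) := by
      rcases eq_or_lt_of_le hτL with h | h
      · rw [← h] at hbayes ⊢
        rw [show μ0 - τH * μH = 0 by linarith]
        simp
      · have hμLμ0 : μ0 ≤ μL := by
          have h2 : τL * μ0 ≤ τL * μL := by nlinarith
          exact le_of_mul_le_mul_left h2 h
        have hch := chord_right hconv hF1 h0.le h1 hμLμ0 hL1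
        calc τL * F μL ≤ τL * (((1 - μL) * F μ0 + (μL - μ0)) / (1 - μ0)) :=
              mul_le_mul_of_nonneg_left hch hτL
          _ = ((τL - τL * μL) * F μ0 + (τL * μL - τL * μ0)) / (1 - μ0) := by
              field_simp
          _ = ((τL - (μ0 - τH * μH)) * F μ0 + ((μ0 - τH * μH) - τL * μ0)) / (1 - μ0) := by
              rw [show τL * μL = μ0 - τH * μH by linarith]
    have bound2 : F μH ≤ μH * F μ0 / μ0 := chord_left hconv hF0 h0 h1.le hH0 hB
    have bound2' : τH * (F μH + b - c * (1 - μH)) ≤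
        (τH * μH) * F μ0 / μ0 + τH * b - c * τH + c * (τH * μH) := by
      have h2 := mul_le_mul_of_nonneg_left bound2 hτH
      have heq : τH * (μH * F μ0 / μ0) = (τH * μH) * F μ0 / μ0 := by ring
      nlinarith [h2, heq]
    set a : ℝ := (τL - (μ0 - τH * μH)) / (1 - μ0) with ha'
    set p : ℝ := (τH * μ0 - τH * μH) / (μ0 * (1 - μ0)) with hp'
    set q : ℝ := (τH * μH) / μ0 with hq'
    have ha : 0 ≤ a := by
      apply div_nonneg _ h0'.le
      nlinarith
    have hpn : 0 ≤ p := by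
      apply div_nonneg _ (by positivity)
      nlinarith
    have hqn : 0 ≤ q := by
      apply div_nonneg _ h0.le
      nlinarith
    have hτL' : τL = 1 - τH := by linarith
    have hsum1 : a + p + q = 1 := by
      rw [ha', hp', hq', hτL']; field_simp; ring
    have hXeq : ((τL - (μ0 - τH * μH)) * F μ0 + ((μ0 - τH * μH) - τL * μ0)) / (1 - μ0)
        + ((τH * μH) * F μ0 / μ0 + τH * b - c * τH + c * (τH * μH))
        = a * F μ0 + p * I + q * P := by
      rw [ha', hp', hq', hI, hP, hτL']; field_simp; ring
    have hfin : a * F μ0 + p * I + q * P ≤ M := by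
      have := mul_le_mul_of_nonneg_left hFM ha
      have := mul_le_mul_of_nonneg_left hIM hpn
      have := mul_le_mul_of_nonneg_left hPM hqn
      nlinarith [hsum1]
    calc ratingValue F b c μL μH τL τH
        ≤ ((τL - (μ0 - τH * μH)) * F μ0 + ((μ0 - τH * μH) - τL * μ0)) / (1 - μ0)
          + ((τH * μH) * F μ0 / μ0 + τH * b - c * τH + c * (τH * μH)) := by
          unfold ratingValue; linarith [bound1, bound2']
      _ = a * F μ0 + p * I + q * P := hXeq
      _ ≤ M := hfin

private lemma thresholds {F : ℝ → ℝ} (hcont : ContinuousOn F (Set.Icc 0 1))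
    (hconv : ConvexOn ℝ (Set.Icc (0:ℝ) 1) F) (hF0 : F 0 = 0) (hF1 : F 1 = 1)
    {b c : ℝ} (hc : 0 < c) (hcb : c < b) :
    ∃ μlo μhi : ℝ, 0 ≤ μlo ∧ μlo ≤ μhi ∧ μhi ≤ 1 ∧
      ∀ μ0 ∈ Set.Ioo (0:ℝ) 1,
        (μ0 ≤ μlo → F μ0 + b - c * (1 - μ0) ≤ μ0 + (1 - μ0) * (b - c) ∧
                    μ0 * (1 + b) ≤ μ0 + (1 - μ0) * (b - c)) ∧
        (μlo < μ0 → μ0 < μhi → μ0 + (1 - μ0) * (b - c) ≤ F μ0 + b - c * (1 - μ0) ∧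
                    μ0 * (1 + b) ≤ F μ0 + b - c * (1 - μ0)) ∧
        (μhi ≤ μ0 → F μ0 + b - c * (1 - μ0) ≤ μ0 * (1 + b) ∧
                    μ0 + (1 - μ0) * (b - c) ≤ μ0 * (1 + b)) := by
  have hbc : (0:ℝ) < b - c := by linarith
  have h2bc : (0:ℝ) < 2 * b - c := by linarith
  set Ef : ℝ → ℝ := fun x => F x + ((b - 1) * x + 0) with hEf
  set Df : ℝ → ℝ := fun x => F x + ((c - 1 - b) * x + (b - c)) with hDf
  have hEconv : ConvexOn ℝ (Set.Icc (0:ℝ) 1) Ef := hconv.add (affine_convexOn (b-1) 0)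
  have hDconv : ConvexOn ℝ (Set.Icc (0:ℝ) 1) Df := hconv.add (affine_convexOn (c-1-b) (b-c))
  have hEcont : ContinuousOn Ef (Set.Icc 0 1) := by
    apply hcont.add
    exact ((continuous_const.mul continuous_id).add continuous_const).continuousOn
  have hDcont : ContinuousOn Df (Set.Icc 0 1) := by
    apply hcont.add
    exact ((continuous_const.mul continuous_id).add continuous_const).continuousOn
  have hE0 : Ef 0 = 0 := by simp [hEf, hF0]
  have hD1 : Df 1 = 0 := by simp [hDf, hF1]
  -- the set where Ef ≤ 0
  set S : Set ℝ := Set.Icc 0 1 ∩ Ef ⁻¹' Set.Iic 0 with hS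
  have hScl : IsClosed S := hEcont.preimage_isClosed_of_isClosed isClosed_Icc isClosed_Iic
  have hScpt : IsCompact S := isCompact_Icc.of_isClosed_subset hScl Set.inter_subset_left
  have hSne : S.Nonempty := ⟨0, ⟨le_refl 0, zero_le_one⟩, by simp [hE0]⟩
  set μlo' : ℝ := sSup S with hμlo'
  have hμlo'S : μlo' ∈ S := hScpt.sSup_mem hSne
  have factE_le : ∀ x, 0 ≤ x → x ≤ μlo' → Ef x ≤ 0 := by
    intro x hx0 hxle
    have hseg : x ∈ segment ℝ (0:ℝ) μlo' := by
      rw [segment_eq_Icc (by linarith : (0:ℝ) ≤ μlo')]; exact ⟨hx0, hxle⟩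
    have := hEconv.le_on_segment ⟨le_refl 0, zero_le_one⟩ hμlo'S.1 hseg
    have h2 : Ef μlo' ≤ 0 := hμlo'S.2
    rw [hE0] at this
    exact le_trans this (by simp [h2])
  have factE_pos : ∀ x, x ∈ Set.Icc (0:ℝ) 1 → μlo' < x → 0 < Ef x := by
    intro x hx hlt
    by_contra h
    push_neg at h
    have : x ∈ S := ⟨hx, h⟩
    exact absurd (le_csSup hScpt.bddAbove this) (not_le.2 hlt)
  -- the set where Df ≤ 0
  set S' : Set ℝ := Set.Icc 0 1 ∩ Df ⁻¹' Set.Iic 0 with hS'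
  have hS'cl : IsClosed S' := hDcont.preimage_isClosed_of_isClosed isClosed_Icc isClosed_Iic
  have hS'cpt : IsCompact S' := isCompact_Icc.of_isClosed_subset hS'cl Set.inter_subset_left
  have hS'ne : S'.Nonempty := ⟨1, ⟨zero_le_one, le_refl 1⟩, by simp [hD1]⟩
  set μhi' : ℝ := sInf S' with hμhi'
  have hμhi'S : μhi' ∈ S' := hS'cpt.sInf_mem hS'ne
  have factD_le : ∀ x, μhi' ≤ x → x ≤ 1 → Df x ≤ 0 := by
    intro x hxge hxle
    have hseg : x ∈ segment ℝ μhi' (1:ℝ) := by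
      rw [segment_eq_Icc (by linarith [hμhi'S.1.2] : μhi' ≤ 1)]; exact ⟨hxge, hxle⟩
    have := hDconv.le_on_segment hμhi'S.1 ⟨zero_le_one, le_refl 1⟩ hseg
    have h2 : Df μhi' ≤ 0 := hμhi'S.2
    rw [hD1] at this
    exact le_trans this (by simp [h2])
  have factD_pos : ∀ x, x ∈ Set.Icc (0:ℝ) 1 → x < μhi' → 0 < Df x := by
    intro x hx hlt
    by_contra h
    push_neg at h
    have : x ∈ S' := ⟨hx, h⟩
    exact absurd (csInf_le hS'cpt.bddBelow this) (not_le.2 hlt)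
  set μstar : ℝ := (b - c) / (2 * b - c) with hμstar
  have hμstar0 : 0 < μstar := div_pos hbc h2bc
  have hμstar1 : μstar < 1 := (div_lt_one h2bc).2 (by linarith)
  have hstar_mul : μstar * (2 * b - c) = b - c := div_mul_cancel₀ _ h2bc.ne'
  refine ⟨min μlo' μstar, max μhi' μstar, le_min hμlo'S.1.1 hμstar0.le,
    le_trans (min_le_right _ _) (le_max_right _ _), max_le hμhi'S.1.2 hμstar1.le, ?_⟩
  rintro μ0 ⟨h0, h1⟩
  have hicc : μ0 ∈ Set.Icc (0:ℝ) 1 := ⟨h0.le, h1.le⟩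
  have hPIiff : F μ0 + b - c * (1 - μ0) - (μ0 + (1 - μ0) * (b - c)) = Ef μ0 := by
    simp only [hEf]; ring
  have hPTiff : F μ0 + b - c * (1 - μ0) - μ0 * (1 + b) = Df μ0 := by
    simp only [hDf]; ring
  refine ⟨?_, ?_, ?_⟩
  · intro hle
    have hle1 : μ0 ≤ μlo' := le_trans hle (min_le_left _ _)
    have hle2 : μ0 ≤ μstar := le_trans hle (min_le_right _ _)
    have hE := factE_le μ0 h0.le hle1
    constructor
    · linarith [hPIiff]
    · -- T ≤ I ⇔ (2b−c) μ0 ≤ b − c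
      have : μ0 * (2 * b - c) ≤ b - c := by
        calc μ0 * (2 * b - c) ≤ μstar * (2 * b - c) :=
              mul_le_mul_of_nonneg_right hle2 h2bc.le
          _ = b - c := hstar_mul
      nlinarith [this]
  · intro hlt1 hlt2
    have hE : 0 ≤ Ef μ0 := by
      by_contra h
      push_neg at h
      have hμ0lo' : μ0 ≤ μlo' := by
        by_contra h2
        push_neg at h2
        exact absurd (factE_pos μ0 hicc h2) (by linarith)
      have hstar_lt : μstar < μ0 := by
        rcases min_cases μlo' μstar with ⟨hmin, hle⟩ | ⟨hmin, hlt⟩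
        · rw [hmin] at hlt1; linarith
        · rw [hmin] at hlt1; exact hlt1
      have hμ0hi' : μ0 < μhi' := by
        rcases max_cases μhi' μstar with ⟨hmax, hle⟩ | ⟨hmax, hlt⟩
        · rw [hmax] at hlt2; exact hlt2
        · rw [hmax] at hlt2; linarith
      have hD := factD_pos μ0 hicc hμ0hi'
      -- Ef μ0 - Df μ0 = (2b−c) μ0 − (b−c) < 0 ⇒ μ0 < μstar, contra
      have hdiff : Ef μ0 - Df μ0 = μ0 * (2 * b - c) - (b - c) := by
        simp only [hEf, hDf]; ring
      have : μ0 * (2 * b - c) < b - c := by linarith [hdiff]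
      have : μ0 < μstar := by
        rw [hμstar, lt_div_iff₀ h2bc]; linarith
      linarith
    have hD : 0 ≤ Df μ0 := by
      by_contra h
      push_neg at h
      have hμ0hi' : μhi' ≤ μ0 := by
        by_contra h2
        push_neg at h2
        exact absurd (factD_pos μ0 hicc h2) (by linarith)
      have hstar_gt : μ0 < μstar := by
        rcases max_cases μhi' μstar with ⟨hmax, hle⟩ | ⟨hmax, hlt⟩
        · rw [hmax] at hlt2; linarith
        · rw [hmax] at hlt2; exact hlt2
      have hμ0lo' : μlo' < μ0 := by
        rcases min_cases μlo' μstar with ⟨hmin, hle⟩ | ⟨hmin, hlt⟩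
        · rw [hmin] at hlt1; exact hlt1
        · rw [hmin] at hlt1; linarith
      have hE2 := factE_pos μ0 hicc hμ0lo'
      have hdiff : Ef μ0 - Df μ0 = μ0 * (2 * b - c) - (b - c) := by
        simp only [hEf, hDf]; ring
      have : b - c < μ0 * (2 * b - c) := by linarith [hdiff]
      have : μstar < μ0 := by
        rw [hμstar, div_lt_iff₀ h2bc]; linarith
      linarith
    exact ⟨by linarith [hPIiff], by linarith [hPTiff]⟩
  · intro hge
    have hge1 : μhi' ≤ μ0 := le_trans (le_max_left _ _) hge
    have hge2 : μstar ≤ μ0 := le_trans (le_max_right _ _) hge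
    have hD := factD_le μ0 hge1 h1.le
    constructor
    · linarith [hPTiff]
    · have : b - c ≤ μ0 * (2 * b - c) := by
        calc b - c = μstar * (2 * b - c) := hstar_mul.symm
          _ ≤ μ0 * (2 * b - c) := mul_le_mul_of_nonneg_right hge2 h2bc.le
      nlinarith [this]

/-- Rating design with strictly convex `F` and `k < ν` (so
`c < b`): there are thresholds `μlo ≤ μhi` such that the inverted fully separating
system is optimal for low priors, pooling on `H` is optimal for intermediate
priors, and the truthful fully separating system is optimal for high priors. -/
theorem rating_design_convex
    (F : ℝ → ℝ)
    (hF : ContDiffOn ℝ 2 F (Set.Icc 0 1))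
    (hmono : MonotoneOn F (Set.Icc 0 1))
    (hF0 : F 0 = 0) (hF1 : F 1 = 1)
    (hconv : StrictConvexOn ℝ (Set.Icc (0 : ℝ) 1) F)
    (ν k : ℝ) (hν : ν ∈ Set.Ioo (0 : ℝ) 1) (hk : 0 < k) (hkν : k < ν) :
    ∃ μlo μhi : ℝ, 0 ≤ μlo ∧ μlo ≤ μhi ∧ μhi ≤ 1 ∧
      ∀ μ0 ∈ Set.Ioo (0 : ℝ) 1,
        -- inverted fully separating: μ_L = 1, μ_H = 0, τ_H = 1 − μ0, τ_L = μ0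
        (μ0 ≤ μlo →
          IsOptimalBS F (ν / (1 - ν)) (k / (1 - ν)) μ0 1 0 μ0 (1 - μ0)) ∧
        -- pooling on H: μ_H = μ0, τ_H = 1, τ_L = 0
        (μlo < μ0 → μ0 < μhi →
          IsOptimalBS F (ν / (1 - ν)) (k / (1 - ν)) μ0 μ0 μ0 0 1) ∧
        -- truthful fully separating: μ_L = 0, μ_H = 1, τ_H = μ0, τ_L = 1 − μ0
        (μhi ≤ μ0 →
          IsOptimalBS F (ν / (1 - ν)) (k / (1 - ν)) μ0 0 1 (1 - μ0) μ0) := by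
  have h1ν : (0:ℝ) < 1 - ν := by linarith [hν.2]
  have hcpos : 0 < k / (1 - ν) := div_pos hk h1ν
  have hccb : k / (1 - ν) < ν / (1 - ν) := by gcongr
  have hconv' : ConvexOn ℝ (Set.Icc (0:ℝ) 1) F := hconv.convexOn
  have hcont : ContinuousOn F (Set.Icc (0:ℝ) 1) := hF.continuousOn
  obtain ⟨μlo, μhi, h0lo, hlohi, hhi1, hmain⟩ :=
    thresholds hcont hconv' hF0 hF1 hcpos hccb
  refine ⟨μlo, μhi, h0lo, hlohi, hhi1, ?_⟩
  rintro μ0 ⟨h0, h1⟩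
  obtain ⟨hA, hB, hC⟩ := hmain μ0 ⟨h0, h1⟩
  set B := ν / (1 - ν) with hBdef
  set C := k / (1 - ν) with hCdef
  have hvalI : ratingValue F B C 1 0 μ0 (1 - μ0) = μ0 + (1 - μ0) * (B - C) := by
    simp [ratingValue, hF0, hF1]
  have hvalP : ratingValue F B C μ0 μ0 0 1 = F μ0 + B - C * (1 - μ0) := by
    simp [ratingValue]
  have hvalT : ratingValue F B C 0 1 (1 - μ0) μ0 = μ0 * (1 + B) := by
    simp [ratingValue, hF0, hF1]
  refine ⟨?_, ?_, ?_⟩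
  · -- inverted
    intro hle
    obtain ⟨hPI, hTI⟩ := hA hle
    refine ⟨⟨⟨zero_le_one, le_refl 1⟩, ⟨le_refl 0, zero_le_one⟩, h0.le, by linarith,
      by ring, by ring⟩, ?_⟩
    intro μL' μH' τL' τH' hp'
    have hv := value_le_max hconv' hF0 hF1 hcpos hccb ⟨h0, h1⟩ hp'
    calc ratingValue F B C μL' μH' τL' τH'
        ≤ max (μ0 + (1 - μ0) * (B - C)) (max (F μ0 + B - C * (1 - μ0)) (μ0 * (1 + B))) := hv
      _ ≤ μ0 + (1 - μ0) * (B - C) := max_le le_rfl (max_le hPI hTI)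
      _ = ratingValue F B C 1 0 μ0 (1 - μ0) := hvalI.symm
  · -- pooling
    intro hlt1 hlt2
    obtain ⟨hIP, hTP⟩ := hB hlt1 hlt2
    refine ⟨⟨⟨h0.le, h1.le⟩, ⟨h0.le, h1.le⟩, le_refl 0, zero_le_one, by ring, by ring⟩, ?_⟩
    intro μL' μH' τL' τH' hp'
    have hv := value_le_max hconv' hF0 hF1 hcpos hccb ⟨h0, h1⟩ hp'
    calc ratingValue F B C μL' μH' τL' τH'
        ≤ max (μ0 + (1 - μ0) * (B - C)) (max (F μ0 + B - C * (1 - μ0)) (μ0 * (1 + B))) := hv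
      _ ≤ F μ0 + B - C * (1 - μ0) := max_le hIP (max_le le_rfl hTP)
      _ = ratingValue F B C μ0 μ0 0 1 := hvalP.symm
  · -- truthful
    intro hge
    obtain ⟨hPT, hIT⟩ := hC hge
    refine ⟨⟨⟨le_refl 0, zero_le_one⟩, ⟨zero_le_one, le_refl 1⟩, by linarith, h0.le,
      by ring, by ring⟩, ?_⟩
    intro μL' μH' τL' τH' hp'
    have hv := value_le_max hconv' hF0 hF1 hcpos hccb ⟨h0, h1⟩ hp'
    calc ratingValue F B C μL' μH' τL' τH'
        ≤ max (μ0 + (1 - μ0) * (B - C)) (max (F μ0 + B - C * (1 - μ0)) (μ0 * (1 + B))) := hv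
      _ ≤ μ0 * (1 + B) := max_le hIT (max_le hPT le_rfl)
      _ = ratingValue F B C 0 1 (1 - μ0) μ0 := hvalT.symm
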